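/- Let G be a group with involutions a, b, c, d, e, f satisfying the braid relations aba = bab, bdb = dbd, dfd = fdf, fef = efe, ece = cec, cac = aca, the commutations [a,d]=[a,e]=[a,f]=[b,c]=[b,e]=[b,f]=[d,e]=[d,c]=[c,f]=1, and c·a·b·a·c = d·f·e·f·d. Then all six products b·a·c·e·f, a·c·e·f·d, c·e·f·d·b, e·f·d·b·a, f·d·b·a·c, and d·b·a·c·e are equal in G. -/

import Mathlib

open scoped commutatorElement

theorem stmt2 {G : Type*} [Group G] (a b c d e f : G)
    (ha : a ^ 2 = 1) (hb : b ^ 2 = 1) (hc : c ^ 2 = 1)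
    (hd : d ^ 2 = 1) (he : e ^ 2 = 1) (hf : f ^ 2 = 1)
    (br1 : a * b * a = b * a * b) (br2 : b * d * b = d * b * d)
    (br3 : d * f * d = f * d * f) (br4 : f * e * f = e * f * e)
    (br5 : e * c * e = c * e * c) (br6 : c * a * c = a * c * a)
    (c1 : ⁅a, d⁆ = 1) (c2 : ⁅a, e⁆ = 1) (c3 : ⁅a, f⁆ = 1)
    (c4 : ⁅b, c⁆ = 1) (c5 : ⁅b, e⁆ = 1) (c6 : ⁅b, f⁆ = 1)
    (c7 : ⁅d, e⁆ = 1) (c8 : ⁅d, c⁆ = 1) (c9 : ⁅c, f⁆ = 1)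
    (hrel : c * a * b * a * c = d * f * e * f * d) :
    b * a * c * e * f = a * c * e * f * d ∧
    a * c * e * f * d = c * e * f * d * b ∧
    c * e * f * d * b = e * f * d * b * a ∧
    e * f * d * b * a = f * d * b * a * c ∧
    f * d * b * a * c = d * b * a * c * e := by
  -- squares
  have sqa : a * a = 1 := by rw [← sq]; exact ha
  have sqc : c * c = 1 := by rw [← sq]; exact hc
  have sqd : d * d = 1 := by rw [← sq]; exact hd
  have sqe : e * e = 1 := by rw [← sq]; exact he
  have sqf : f * f = 1 := by rw [← sq]; exact hf
  have ia : ∀ x : G, a * (a * x) = x := fun x => by rw [← mul_assoc, sqa, one_mul]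
  have ic : ∀ x : G, c * (c * x) = x := fun x => by rw [← mul_assoc, sqc, one_mul]
  have id' : ∀ x : G, d * (d * x) = x := fun x => by rw [← mul_assoc, sqd, one_mul]
  have ie : ∀ x : G, e * (e * x) = x := fun x => by rw [← mul_assoc, sqe, one_mul]
  have if' : ∀ x : G, f * (f * x) = x := fun x => by rw [← mul_assoc, sqf, one_mul]
  -- commutations as parametrized swaps
  have mad : a * d = d * a := commutatorElement_eq_one_iff_mul_comm.mp c1
  have mae : a * e = e * a := commutatorElement_eq_one_iff_mul_comm.mp c2
  have maf : a * f = f * a := commutatorElement_eq_one_iff_mul_comm.mp c3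
  have mde : d * e = e * d := commutatorElement_eq_one_iff_mul_comm.mp c7
  have mdc : d * c = c * d := commutatorElement_eq_one_iff_mul_comm.mp c8
  have mcf : c * f = f * c := commutatorElement_eq_one_iff_mul_comm.mp c9
  have cad : ∀ x : G, a * (d * x) = d * (a * x) := fun x => by
    rw [← mul_assoc, mad, mul_assoc]
  have cae : ∀ x : G, a * (e * x) = e * (a * x) := fun x => by
    rw [← mul_assoc, mae, mul_assoc]
  have caf : ∀ x : G, a * (f * x) = f * (a * x) := fun x => by
    rw [← mul_assoc, maf, mul_assoc]
  have cde : ∀ x : G, d * (e * x) = e * (d * x) := fun x => by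
    rw [← mul_assoc, mde, mul_assoc]
  have cdc : ∀ x : G, d * (c * x) = c * (d * x) := fun x => by
    rw [← mul_assoc, mdc, mul_assoc]
  have ccf : ∀ x : G, c * (f * x) = f * (c * x) := fun x => by
    rw [← mul_assoc, mcf, mul_assoc]
  -- braids parametrized
  have br3' : ∀ x : G, d * (f * (d * x)) = f * (d * (f * x)) := fun x => by
    rw [← mul_assoc, ← mul_assoc, br3, mul_assoc, mul_assoc]
  have br4' : ∀ x : G, f * (e * (f * x)) = e * (f * (e * x)) := fun x => by
    rw [← mul_assoc, ← mul_assoc, br4, mul_assoc, mul_assoc]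
  have br5' : ∀ x : G, e * (c * (e * x)) = c * (e * (c * x)) := fun x => by
    rw [← mul_assoc, ← mul_assoc, br5, mul_assoc, mul_assoc]
  have br6' : ∀ x : G, c * (a * (c * x)) = a * (c * (a * x)) := fun x => by
    rw [← mul_assoc, ← mul_assoc, br6, mul_assoc, mul_assoc]
  -- eliminate b using hrel
  have hbeq : b = a * (c * (d * (f * (e * (f * (d * (c * a))))))) := by
    have : b = a * c * (c * a * b * a * c) * c * a := by
      simp [mul_assoc, ia, ic, sqa, sqc]
    rw [this, hrel]; simp [mul_assoc]
  have hb' : ∀ x : G, b * x = a * (c * (d * (f * (e * (f * (d * (c * (a * x)))))))) :=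
    fun x => by rw [hbeq]; simp [mul_assoc]
  -- the five key identities, all with value a c e f d
  have key1 : ∀ x : G, b * (a * (c * (e * (f * x)))) = a * (c * (e * (f * (d * x)))) := by
    intro x
    rw [hb', ia, ic, cde, br4', ie, cde, br3', if']
  have key2 : ∀ x : G, c * (e * (f * (d * (b * x)))) = a * (c * (e * (f * (d * x)))) := by
    intro x
    rw [hb', ← cad, ← caf, ← cae, cdc, id', ccf, if', br5', ccf, ← cdc, ic, ← cad, ← caf,
      ← cae, br6', ia]
  have key3 : ∀ x : G, e * (f * (d * (b * (a * x)))) = a * (c * (e * (f * (d * x)))) := by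
    intro x
    rw [hb', ia, ← cad, ← caf, ← cae, cdc, id', ccf, if', br5', ccf, ← cdc, ic]
  have key4 : ∀ x : G, f * (d * (b * (a * (c * x)))) = a * (c * (e * (f * (d * x)))) := by
    intro x
    rw [hb', ia, ic, ← cad, ← caf, cdc, id', ← ccf, if']
  have key5 : ∀ x : G, d * (b * (a * (c * (e * x)))) = a * (c * (e * (f * (d * x)))) := by
    intro x
    rw [hb', ia, ic, ← cad, cde, br4', ie, cdc, id']
  refine ⟨?_, ?_, ?_, ?_, ?_⟩
  · simpa [mul_assoc] using key1 1
  · simpa [mul_assoc] using (key2 1).symm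
  · simpa [mul_assoc] using (key2 1).trans (key3 1).symm
  · simpa [mul_assoc] using (key3 1).trans (key4 1).symm
  · simpa [mul_assoc] using (key4 1).trans (key5 1).symm
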